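/- arXiv:1608.03957 — 8 statements merged into one kernel-verified Lean document; each statement's English description precedes it below -/
import Mathlib

section
/- Let f : ℕ → ℂ be completely multiplicative, and suppose f is eventually periodic (there exist N ≥ 0 and T ≥ 1 with f(n + T) = f(n) for all n ≥ N). If there exists an integer n > 1 with f(n) ≠ 0, then f agrees with a Dirichlet character: there exist an integer q ≥ 1 and a Dirichlet character χ mod q such that f(n) = χ(n) for all n ≥ 1. -/
/-- `f : ℕ → ℂ` is completely multiplicative. -/
def CompletelyMultiplicativeFun (f : ℕ → ℂ) : Prop :=
  f 1 = 1 ∧ ∀ m n : ℕ, f (m * n) = f m * f n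

theorem completely_multiplicative_eventually_periodic_is_dirichlet_character
    (f : ℕ → ℂ) (hf : CompletelyMultiplicativeFun f)
    (hper : ∃ N T : ℕ, 1 ≤ T ∧ ∀ n ≥ N, f (n + T) = f n)
    (hnz : ∃ n : ℕ, 1 < n ∧ f n ≠ 0) :
    ∃ (q : ℕ), 1 ≤ q ∧ ∃ χ : DirichletCharacter ℂ q, ∀ n : ℕ, 1 ≤ n → f n = χ (n : ZMod q) := by
  classical
  obtain ⟨h1, hmul⟩ := hf
  obtain ⟨N, T, hT1, hT⟩ := hper
  obtain ⟨n0, hn0, hfn0⟩ := hnz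
  -- powers
  have hpow : ∀ n k : ℕ, f (n ^ k) = f n ^ k := by
    intro n k
    induction k with
    | zero => simpa using h1
    | succ k ih => rw [pow_succ, pow_succ, hmul, ih]
  -- a large nonzero point
  obtain ⟨a, haN, ha1, hfa⟩ : ∃ a : ℕ, N ≤ a ∧ 1 ≤ a ∧ f a ≠ 0 := by
    refine ⟨n0 ^ N, ?_, ?_, ?_⟩
    · exact le_of_lt (Nat.lt_pow_self (n := N) hn0)
    · exact Nat.one_le_pow _ _ (by omega)
    · rw [hpow]; exact pow_ne_zero _ hfn0
  -- multiples of period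
  have hTk : ∀ k n : ℕ, N ≤ n → f (n + k * T) = f n := by
    intro k
    induction k with
    | zero => simp
    | succ k ih =>
      intro n hn
      have : n + (k + 1) * T = (n + k * T) + T := by ring
      rw [this, hT _ (by omega), ih n hn]
  -- pure periodicity with period T
  have hP : ∀ n : ℕ, 1 ≤ n → f (n + T) = f n := by
    intro n hn
    have key : f (a * (n + T)) = f (a * n) := by
      have e : a * (n + T) = a * n + T * a := by ring
      rw [e, mul_comm T a]
      exact hTk a (a * n) (le_trans haN (Nat.le_mul_of_pos_right a hn))
    rw [hmul, hmul] at key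
    exact mul_left_cancel₀ hfa key
  -- minimal period
  have hex : ∃ t : ℕ, 1 ≤ t ∧ ∀ n : ℕ, 1 ≤ n → f (n + t) = f n := ⟨T, hT1, hP⟩
  set q := Nat.find hex with hqdef
  obtain ⟨hq1, hqper⟩ := Nat.find_spec hex
  -- congruence lemma
  have hqk : ∀ k n : ℕ, 1 ≤ n → f (n + k * q) = f n := by
    intro k
    induction k with
    | zero => simp
    | succ k ih =>
      intro n hn
      have : n + (k + 1) * q = (n + k * q) + q := by ring
      rw [this, hqper _ (le_trans hn (Nat.le_add_right n (k * q))), ih n hn]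
  have hcong : ∀ m n : ℕ, 1 ≤ m → 1 ≤ n → m ≡ n [MOD q] → f m = f n := by
    have half : ∀ m n : ℕ, 1 ≤ m → m ≤ n → m ≡ n [MOD q] → f m = f n := by
      intro m n hm hmn h
      obtain ⟨k, hk⟩ := (Nat.modEq_iff_dvd' hmn).mp h
      have : n = m + k * q := by rw [mul_comm k q]; omega
      rw [this, hqk k m hm]
    intro m n hm hn h
    rcases le_total m n with hle | hle
    · exact half m n hm hle h
    · exact (half n m hn hle h.symm).symm
  -- primes dividing q kill f
  have hprime : ∀ p : ℕ, p.Prime → p ∣ q → f p = 0 := by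
    intro p pp hpq
    by_contra hfp
    have hpq' : p ≤ q := Nat.le_of_dvd (by omega) hpq
    have hlt : q / p < q := Nat.div_lt_self (by omega) pp.one_lt
    refine Nat.find_min hex hlt ⟨Nat.div_pos hpq' pp.pos, ?_⟩
    intro n hn
    have key : f (p * (n + q / p)) = f (p * n) := by
      have e : p * (n + q / p) = p * n + q := by
        rw [Nat.mul_add, Nat.mul_div_cancel' hpq]
      rw [e]
      exact hqper _ (le_trans hn (Nat.le_mul_of_pos_left n pp.pos))
    rw [hmul, hmul] at key
    exact mul_left_cancel₀ hfp key
  -- coprime values nonzero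
  have hcop : ∀ n : ℕ, 1 ≤ n → Nat.Coprime n q → f n ≠ 0 := by
    intro n hn h
    have htot : n ^ Nat.totient q ≡ 1 [MOD q] := Nat.ModEq.pow_totient h
    have : f (n ^ Nat.totient q) = 1 := by
      rw [hcong _ 1 (Nat.one_le_pow _ _ (by omega)) le_rfl htot, h1]
    rw [hpow] at this
    intro h0
    rw [h0, zero_pow (Nat.totient_pos.mpr (by omega)).ne'] at this
    exact zero_ne_one this
  by_cases hqone : q = 1
  · refine ⟨1, le_rfl, 1, ?_⟩
    intro n hn
    have h2 : f n = f 1 := hcong n 1 hn le_rfl (by rw [hqone]; exact Nat.modEq_one)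
    have hu : ((n : ZMod 1)) = 1 := Subsingleton.elim _ _
    rw [h2, h1, hu, map_one]
  · -- q ≥ 2
    have hq2 : 2 ≤ q := by omega
    haveI : NeZero q := ⟨by omega⟩
    haveI : Fact (1 < q) := ⟨by omega⟩
    -- values at units
    have hval_pos : ∀ u : (ZMod q)ˣ, 1 ≤ (u : ZMod q).val := by
      intro u
      have hc := ZMod.val_coe_unit_coprime u
      rcases Nat.eq_zero_or_pos (u : ZMod q).val with h0 | h
      · exfalso; rw [h0] at hc; simp [Nat.Coprime] at hc; omega
      · exact h
    have hval_ne : ∀ u : (ZMod q)ˣ, f (u : ZMod q).val ≠ 0 := fun u =>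
      hcop _ (hval_pos u) (ZMod.val_coe_unit_coprime u)
    let ψ : (ZMod q)ˣ →* ℂˣ :=
      { toFun := fun u => Units.mk0 (f (u : ZMod q).val) (hval_ne u)
        map_one' := by
          ext
          simp [ZMod.val_one, h1]
        map_mul' := by
          intro u v
          ext
          simp only [Units.val_mul, Units.val_mk0]
          rw [← hmul]
          refine hcong _ _ (hval_pos (u * v)) (Nat.one_le_iff_ne_zero.mpr ?_) ?_
          · exact Nat.mul_ne_zero (by have := hval_pos u; omega) (by have := hval_pos v; omega)
          · rw [ZMod.val_mul]
            exact Nat.mod_modEq _ q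
        }
    refine ⟨q, by omega, MulChar.ofUnitHom ψ, ?_⟩
    intro n hn
    by_cases hc : Nat.Coprime n q
    · have hu : IsUnit ((n : ZMod q)) := (ZMod.isUnit_iff_coprime n q).mpr hc
      obtain ⟨u, hu'⟩ := hu
      rw [← hu', MulChar.ofUnitHom_coe]
      show f n = f (u : ZMod q).val
      refine hcong n _ hn (hval_pos u) ?_
      have : (u : ZMod q).val = n % q := by rw [hu', ZMod.val_natCast]
      rw [this]
      exact (Nat.mod_modEq n q).symm
    · have hnu : ¬ IsUnit ((n : ZMod q)) := fun h => hc ((ZMod.isUnit_iff_coprime n q).mp h)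
      rw [MulChar.map_nonunit _ hnu]
      obtain ⟨p, pp, hpg⟩ := Nat.exists_prime_and_dvd (n := Nat.gcd n q) (by
        intro h
        exact hc (by simpa [Nat.Coprime] using h))
      have hpn : p ∣ n := hpg.trans (Nat.gcd_dvd_left _ _)
      have hpq : p ∣ q := hpg.trans (Nat.gcd_dvd_right _ _)
      obtain ⟨m, hm⟩ := hpn
      rw [hm, hmul, hprime p pp hpq, zero_mul]
end

section
/- Let q ≥ 2 be an integer and let f : ℕ → ℂ be completely multiplicative and q-automatic. Then every nonzero value of f is a root of unity: for every n ≥ 1, either f(n) = 0 or there exists an integer k ≥ 1 with f(n)^k = 1. -/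
/-- `f : ℕ → ℂ` is `q`-automatic: its `q`-kernel is finite. -/
def IsAutomatic (q : ℕ) (f : ℕ → ℂ) : Prop :=
  Set.Finite {g : ℕ → ℂ | ∃ k s : ℕ, s < q ^ k ∧ g = fun m => f (q ^ k * m + s)}

theorem automatic_completely_multiplicative_values_roots_of_unity
    (q : ℕ) (hq : 2 ≤ q) (f : ℕ → ℂ)
    (hmul : CompletelyMultiplicativeFun f) (haut : IsAutomatic q f) :
    ∀ n : ℕ, 1 ≤ n → f n = 0 ∨ ∃ k : ℕ, 1 ≤ k ∧ f n ^ k = 1 := by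
  obtain ⟨h1, hm⟩ := hmul
  -- the range of f is finite
  have hrange : (Set.range f).Finite := by
    have : Set.range f ⊆ (fun g : ℕ → ℂ => g 0) ''
        {g : ℕ → ℂ | ∃ k s : ℕ, s < q ^ k ∧ g = fun m => f (q ^ k * m + s)} := by
      rintro x ⟨n, rfl⟩
      refine ⟨fun m => f (q ^ n * m + n), ⟨n, n, Nat.lt_pow_self (by omega), rfl⟩, ?_⟩
      simp
    exact (haut.image _).subset this
  intro n hn
  -- powers of f n
  have hpow : ∀ j : ℕ, f n ^ j ∈ Set.range f := by
    intro j
    refine ⟨n ^ j, ?_⟩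
    induction j with
    | zero => simpa using h1
    | succ j ih => rw [pow_succ, hm, ih, pow_succ]
  have := Set.infinite_univ (α := ℕ)
  obtain ⟨a, -, b, -, hab, heq⟩ :=
    this.exists_ne_map_eq_of_mapsTo (f := fun j => f n ^ j)
      (fun j _ => hpow j) hrange
  wlog hlt : a < b generalizing a b
  · exact this b a hab.symm heq.symm (by omega)
  by_cases h0 : f n = 0
  · exact Or.inl h0
  right
  refine ⟨b - a, by omega, ?_⟩
  have : f n ^ a * f n ^ (b - a) = f n ^ a * 1 := by
    rw [mul_one, ← pow_add, Nat.add_sub_cancel' hlt.le, heq]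
  exact mul_left_cancel₀ (pow_ne_zero a h0) this
end

section
/- Let a be a nonzero integer with a ≢ 3 (mod 4). Then the Kronecker symbol κ_a : ℕ → ℤ is periodic: there exists an integer T ≥ 1 such that κ_a(n + T) = κ_a(n) for all n ≥ 1. -/
/-- The Kronecker symbol `κ_a(n) = (a | n)` for `n : ℕ`. -/
def kron (a : ℤ) (n : ℕ) : ℤ :=
  if n = 0 then 0
  else (ZMod.χ₈ (a : ZMod 8)) ^ (padicValNat 2 n) * jacobiSym a (n / 2 ^ padicValNat 2 n)

private lemma chi8_neg : ∀ x : ZMod 8, ZMod.χ₈ (-x) = ZMod.χ₈ x := by decide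

private lemma chi8_two_mul : ∀ x : ZMod 8, ZMod.χ₈ (2 * x) = 0 := by decide

private lemma chi8_int_natAbs (a : ℤ) :
    ZMod.χ₈ (a.natAbs : ZMod 8) = ZMod.χ₈ (a : ZMod 8) := by
  rcases Int.natAbs_eq a with h | h
  · nth_rw 2 [h]; rw [Int.cast_natCast]
  · nth_rw 2 [h]; rw [Int.cast_neg, Int.cast_natCast, chi8_neg]

private lemma jacobi_flip {a : ℤ} (ha : a % 4 = 1) {m : ℕ} (hm : Odd m) :
    jacobiSym a m = jacobiSym (m : ℤ) a.natAbs := by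
  rcases Int.natAbs_eq a with hsg | hsg
  · have h4 : a.natAbs % 4 = 1 := by omega
    nth_rw 1 [hsg]
    rw [jacobiSym.quadratic_reciprocity_one_mod_four h4 hm]
  · have h4 : a.natAbs % 4 = 3 := by omega
    have hodd : Odd a.natAbs := by
      rw [Nat.odd_iff]; omega
    nth_rw 1 [hsg]
    rw [jacobiSym.neg _ hm]
    rcases Nat.odd_mod_four_iff.mp (Nat.odd_iff.mp hm) with hm4 | hm4
    · rw [ZMod.χ₄_nat_one_mod_four hm4, one_mul,
        jacobiSym.quadratic_reciprocity_one_mod_four' hodd hm4]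
    · rw [ZMod.χ₄_nat_three_mod_four hm4,
        jacobiSym.quadratic_reciprocity_three_mod_four h4 hm4]
      ring

private lemma kron_eq_jacobi {a : ℤ} (ha : a % 4 = 1) {n : ℕ} (hn : n ≠ 0) :
    kron a n = jacobiSym (n : ℤ) a.natAbs := by
  have hodd : Odd a.natAbs := by rw [Nat.odd_iff]; omega
  set e := padicValNat 2 n with he
  set m := n / 2 ^ e with hmdef
  have hfac : n.factorization 2 = e := Nat.factorization_def n (by norm_num)
  have hne : 2 ^ e * m = n := by
    have h0 := Nat.ordProj_mul_ordCompl_eq_self n 2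
    rw [hfac] at h0
    exact h0
  have hm : Odd m := by
    have h0 := Nat.not_dvd_ordCompl Nat.prime_two hn
    rw [hfac] at h0
    exact Nat.odd_iff.mpr (Nat.two_dvd_ne_zero.mp h0)
  rw [kron, if_neg hn, ← he, ← hmdef]
  calc ZMod.χ₈ (a : ZMod 8) ^ e * jacobiSym a m
      = ZMod.χ₈ (a.natAbs : ZMod 8) ^ e * jacobiSym (m : ℤ) a.natAbs := by
        rw [chi8_int_natAbs, jacobi_flip ha hm]
    _ = jacobiSym 2 a.natAbs ^ e * jacobiSym (m : ℤ) a.natAbs := by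
        rw [jacobiSym.at_two hodd]
    _ = jacobiSym ((2 : ℤ) ^ e * (m : ℤ)) a.natAbs := by
        rw [jacobiSym.mul_left, jacobiSym.pow_left]
    _ = jacobiSym ((2 ^ e * m : ℕ) : ℤ) a.natAbs := by push_cast; rfl
    _ = jacobiSym (n : ℤ) a.natAbs := by rw [hne]

theorem kron_periodic_of_not_three_mod_four (a : ℤ) (ha : a ≠ 0)
    (h : ¬ a ≡ 3 [ZMOD 4]) :
    ∃ T : ℕ, 1 ≤ T ∧ ∀ n : ℕ, 1 ≤ n → kron a (n + T) = kron a n := by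
  have hA : 1 ≤ a.natAbs := Int.natAbs_pos.mpr ha
  have h3 : a % 4 ≠ 3 := fun hh => h (show a % 4 = 3 % 4 by omega)
  rcases Int.even_or_odd a with hev | hod
  · -- a even
    refine ⟨4 * a.natAbs, by omega, fun n hn => ?_⟩
    have hchi : ZMod.χ₈ (a : ZMod 8) = 0 := by
      obtain ⟨k, hk⟩ := hev
      have : (a : ZMod 8) = 2 * (k : ZMod 8) := by rw [hk]; push_cast; ring
      rw [this, chi8_two_mul]
    have hn0 : n ≠ 0 := by omega
    have hnT0 : n + 4 * a.natAbs ≠ 0 := by omega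
    rw [kron, kron, if_neg hn0, if_neg hnT0]
    rcases Nat.even_or_odd n with hne | hno
    · -- n even: both sides zero
      have h1 : 1 ≤ padicValNat 2 n :=
        one_le_padicValNat_of_dvd (by omega) hne.two_dvd
      have h2 : 1 ≤ padicValNat 2 (n + 4 * a.natAbs) :=
        one_le_padicValNat_of_dvd (by omega) (by
          exact Dvd.dvd.add hne.two_dvd ⟨2 * a.natAbs, by ring⟩)
      rw [hchi, zero_pow (by omega), zero_pow (by omega), zero_mul, zero_mul]
    · -- n odd
      have hnoT : Odd (n + 4 * a.natAbs) := by
        rcases hno with ⟨k, hk⟩; exact ⟨k + 2 * a.natAbs, by omega⟩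
      have hv1 : padicValNat 2 n = 0 :=
        padicValNat.eq_zero_of_not_dvd (by rw [Nat.two_dvd_ne_zero, Nat.odd_iff.mp hno])
      have hv2 : padicValNat 2 (n + 4 * a.natAbs) = 0 :=
        padicValNat.eq_zero_of_not_dvd (by rw [Nat.two_dvd_ne_zero, Nat.odd_iff.mp hnoT])
      rw [hv1, hv2]
      simp only [pow_zero, one_mul, Nat.div_one]
      rw [jacobiSym.mod_right a hnoT, jacobiSym.mod_right a hno, Nat.add_mod_right]
  · -- a odd, hence a % 4 = 1
    have h41 : a % 4 = 1 := by
      rcases hod with ⟨k, hk⟩; omega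
    refine ⟨a.natAbs, hA, fun n hn => ?_⟩
    rw [kron_eq_jacobi h41 (by omega), kron_eq_jacobi h41 (by omega)]
    apply jacobiSym.mod_left'
    push_cast
    conv_lhs => rw [show (n : ℤ) + |a| = n + |a| * 1 by ring]
    rw [Int.add_mul_emod_self_left]
end

section
/- Let a be an integer with a ≡ 3 (mod 4). Then the Kronecker symbol κ_a : ℕ → ℤ is not eventually periodic: there do not exist integers N ≥ 0 and T ≥ 1 such that κ_a(n + T) = κ_a(n) for all n ≥ N. -/
/-- Evaluation of `kron` at `2^e * m` with `m` odd. -/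
lemma kron_two_pow_mul (a : ℤ) (e m : ℕ) (hm : m % 2 = 1) :
    kron a (2 ^ e * m) = (ZMod.χ₈ (a : ZMod 8)) ^ e * jacobiSym a m := by
  have hm0 : m ≠ 0 := by omega
  have hne : 2 ^ e * m ≠ 0 := by positivity
  have hval : padicValNat 2 (2 ^ e * m) = e := by
    rw [padicValNat.mul (p := 2) (pow_ne_zero _ two_ne_zero) hm0,
      padicValNat.prime_pow, padicValNat.eq_zero_of_not_dvd (by omega)]
    omega
  rw [kron, if_neg hne, hval, Nat.mul_div_cancel_left _ (pow_pos two_pos e)]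

/-- `J(a | w) = -1` when `a ≡ 3 mod 4`, `w ≡ 3 mod 4` and `w ≡ 1 mod |a|`. -/
lemma jacobi_neg_one (a : ℤ) (h : a % 4 = 3) (w : ℕ) (hw4 : w % 4 = 3)
    (hwb : (w : ℤ) % (a.natAbs : ℤ) = 1 % (a.natAbs : ℤ)) : jacobiSym a w = -1 := by
  set b := a.natAbs with hb
  have hwodd : Odd w := Nat.odd_iff.mpr (by omega)
  have hJw : jacobiSym (w : ℤ) b = 1 := by
    rw [jacobiSym.mod_left' hwb, jacobiSym.one_left]
  rcases Int.natAbs_eq a with ha | ha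
  · -- a = b > 0, b ≡ 3 mod 4
    have hb4 : b % 4 = 3 := by
      have h1 : ((b : ℤ)) % 4 = 3 := by rw [← ha]; exact h
      omega
    rw [ha, jacobiSym.quadratic_reciprocity_three_mod_four hb4 hw4, hJw]
  · -- a = -b, b ≡ 1 mod 4
    have hb4 : b % 4 = 1 := by
      have hc : (-(b : ℤ)) % 4 = 3 := by rw [← ha]; exact h
      omega
    have hsplit : a = -1 * (b : ℤ) := by rw [ha]; ring
    rw [hsplit, jacobiSym.mul_left, jacobiSym.at_neg_one hwodd,
      ZMod.χ₄_nat_three_mod_four hw4,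
      jacobiSym.quadratic_reciprocity_one_mod_four hb4 hwodd, hJw]
    ring

/-- `J(a | w) = 1` when `a ≡ 3 mod 4`, `w ≡ 1 mod 4` and `w ≡ 1 mod |a|`. -/
lemma jacobi_pos_one (a : ℤ) (h : a % 4 = 3) (w : ℕ) (hw4 : w % 4 = 1)
    (hwb : (w : ℤ) % (a.natAbs : ℤ) = 1 % (a.natAbs : ℤ)) : jacobiSym a w = 1 := by
  set b := a.natAbs with hb
  have hwodd : Odd w := Nat.odd_iff.mpr (by omega)
  have hJw : jacobiSym (w : ℤ) b = 1 := by
    rw [jacobiSym.mod_left' hwb, jacobiSym.one_left]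
  rcases Int.natAbs_eq a with ha | ha
  · have hbodd : Odd b := by
      have h1 : ((b : ℤ)) % 4 = 3 := by rw [← ha]; exact h
      exact Nat.odd_iff.mpr (by omega)
    rw [ha, jacobiSym.quadratic_reciprocity_one_mod_four' hbodd hw4, hJw]
  · have hb4 : b % 4 = 1 := by
      have hc : (-(b : ℤ)) % 4 = 3 := by rw [← ha]; exact h
      omega
    have hsplit : a = -1 * (b : ℤ) := by rw [ha]; ring
    rw [hsplit, jacobiSym.mul_left, jacobiSym.at_neg_one hwodd,
      ZMod.χ₄_nat_one_mod_four hw4,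
      jacobiSym.quadratic_reciprocity_one_mod_four hb4 hwodd, hJw]
    ring

theorem kron_not_eventually_periodic_of_three_mod_four (a : ℤ) (h : a ≡ 3 [ZMOD 4]) :
    ¬ ∃ N T : ℕ, 1 ≤ T ∧ ∀ n ≥ N, kron a (n + T) = kron a n := by
  have ha4 : a % 4 = 3 := by
    have h' : a % 4 = 3 % 4 := h
    omega
  set b := a.natAbs with hbdef
  have hb_odd : b % 2 = 1 := by
    rcases Int.natAbs_eq a with ha | ha
    · have h1 : ((b : ℤ)) % 4 = 3 := by rw [← ha]; exact ha4
      omega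
    · have h1 : (-(b : ℤ)) % 4 = 3 := by rw [← ha]; exact ha4
      omega
  have hb_pos : 1 ≤ b := by omega
  rintro ⟨N, T, hT, hper⟩
  -- iterate the periodicity
  have hiter : ∀ k : ℕ, ∀ n ≥ N, kron a (n + k * T) = kron a n := by
    intro k
    induction k with
    | zero => simp
    | succ k ih =>
      intro n hn
      have h1 : n + (k + 1) * T = (n + k * T) + T := by ring
      rw [h1, hper _ (le_trans hn (Nat.le_add_right _ _)), ih n hn]
  -- decompose T = 2^e * u with u odd
  set e := padicValNat 2 T with he
  set u := T / 2 ^ e with hudef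
  have hTu : T = 2 ^ e * u := by
    rw [hudef, Nat.mul_div_cancel' pow_padicValNat_dvd]
  have hu_odd : u % 2 = 1 := by
    by_contra hne2
    have h2u : (2 : ℕ) ∣ u := by omega
    obtain ⟨v, hv⟩ := h2u
    apply pow_succ_padicValNat_not_dvd (p := 2) (n := T) (by omega)
    rw [← he, pow_succ, hTu, hv]
    exact ⟨v, by ring⟩
  -- solve 2*u*j ≡ 2*b [ZMOD 4*b]
  set d := Nat.gcd u (2 * b) with hddef
  have hd_dvd_u : d ∣ u := Nat.gcd_dvd_left _ _
  have hd_odd : ¬ (2 : ℕ) ∣ d := by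
    intro h2
    have h2u : (2 : ℕ) ∣ u := dvd_trans h2 hd_dvd_u
    omega
  have hd_dvd_b : d ∣ b := by
    have h2b : d ∣ 2 * b := Nat.gcd_dvd_right u (2 * b)
    have hcop : Nat.Coprime d 2 :=
      ((Nat.Prime.coprime_iff_not_dvd Nat.prime_two).mpr hd_odd).symm
    exact hcop.dvd_of_dvd_mul_left h2b
  obtain ⟨c, hc⟩ := hd_dvd_b
  -- Bezout
  have hbez : (d : ℤ) = u * Nat.gcdA u (2 * b) + (2 * b) * Nat.gcdB u (2 * b) :=
    Nat.gcd_eq_gcd_ab u (2 * b)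
  set X : ℤ := Nat.gcdA u (2 * b) * c with hXdef
  have hX : (u : ℤ) * X ≡ (b : ℤ) [ZMOD (2 * (b : ℤ))] := by
    refine Int.modEq_iff_dvd.mpr ⟨Nat.gcdB u (2 * b) * c, ?_⟩
    have hcZ : (b : ℤ) = (d : ℤ) * c := by exact_mod_cast hc
    rw [hXdef]
    push_cast at hbez ⊢
    linear_combination hcZ + (c : ℤ) * hbez
  have h2b_pos : (0 : ℤ) < 2 * (b : ℤ) := by positivity
  set j : ℕ := (X % (2 * (b : ℤ))).toNat with hjdef
  have hjX : (j : ℤ) = X % (2 * (b : ℤ)) := by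
    rw [hjdef]
    exact Int.toNat_of_nonneg (Int.emod_nonneg X (by omega))
  have hXj : X ≡ (j : ℤ) [ZMOD (2 * (b : ℤ))] := by
    show X % (2 * (b : ℤ)) = (j : ℤ) % (2 * (b : ℤ))
    rw [hjX]
    exact (Int.emod_emod_of_dvd X dvd_rfl).symm
  have hujb : ((u : ℤ) * j) ≡ (b : ℤ) [ZMOD (2 * (b : ℤ))] :=
    ((Int.ModEq.mul_left (u : ℤ) hXj).symm.trans hX)
  set P : ℕ := u * j with hPdef
  have hPcast : (P : ℤ) = (u : ℤ) * (j : ℤ) := by rw [hPdef]; push_cast; ring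
  have hcong : (2 * (P : ℤ)) ≡ 2 * (b : ℤ) [ZMOD (2 * (2 * (b : ℤ)))] := by
    rw [hPcast]
    exact hujb.mul_left' (c := 2)
  -- define w and w'
  set w : ℕ := 2 * b * (2 * N + 1) + 1 with hwdef
  have hw4 : w % 4 = 3 := by
    obtain ⟨c', hc'⟩ : ∃ c', b = 2 * c' + 1 := ⟨b / 2, by omega⟩
    have hweq : w = 4 * (2 * c' * N + c' + N) + 3 := by
      rw [hwdef, hc']; ring
    rw [hweq, Nat.mul_add_mod]
  have hwM : (w : ℤ) ≡ 1 [ZMOD (b : ℤ)] := by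
    refine Int.modEq_iff_dvd.mpr ⟨-(2 * (2 * (N : ℤ) + 1)), ?_⟩
    rw [hwdef]; push_cast; ring
  have hw_odd : w % 2 = 1 := by omega
  have hwN : N ≤ w := by
    have h1 : 2 * N + 1 ≤ 2 * b * (2 * N + 1) := Nat.le_mul_of_pos_left _ (by omega)
    omega
  set w' : ℕ := w + 2 * P with hw'def
  -- congruence facts about w'
  have hcong4 : (2 * (P : ℤ)) % 4 = 2 := by
    have h4d : (4 : ℤ) ∣ 2 * (2 * (b : ℤ)) := ⟨b, by ring⟩
    have h4 : (2 * (P : ℤ)) % 4 = (2 * (b : ℤ)) % 4 := hcong.of_dvd h4d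
    omega
  have hb0 : (2 * (P : ℤ)) ≡ 0 [ZMOD (b : ℤ)] := by
    have hbd : ((b : ℤ)) ∣ 2 * (2 * (b : ℤ)) := ⟨4, by ring⟩
    have h1 : (2 * (P : ℤ)) ≡ 2 * (b : ℤ) [ZMOD (b : ℤ)] := hcong.of_dvd hbd
    have h2 : (2 * (b : ℤ)) ≡ 0 [ZMOD (b : ℤ)] := Int.modEq_zero_iff_dvd.mpr ⟨2, by ring⟩
    exact h1.trans h2
  have hw'4 : w' % 4 = 1 := by
    have hnat : (2 * P) % 4 = 2 := by omega
    omega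
  have hw'M : (w' : ℤ) ≡ 1 [ZMOD (b : ℤ)] := by
    have hcast : (w' : ℤ) = (w : ℤ) + 2 * (P : ℤ) := by rw [hw'def]; push_cast; ring
    calc (w' : ℤ) = (w : ℤ) + 2 * (P : ℤ) := hcast
    _ ≡ 1 + 0 [ZMOD (b : ℤ)] := Int.ModEq.add hwM hb0
    _ = 1 := by ring
  have hw'_odd : w' % 2 = 1 := by omega
  -- evaluate kron at 2^e * w and 2^e * w'
  have hK1 : kron a (2 ^ e * w) = (ZMod.χ₈ (a : ZMod 8)) ^ e * (-1) := by
    rw [kron_two_pow_mul a e w hw_odd, jacobi_neg_one a ha4 w hw4 hwM]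
  have hK2 : kron a (2 ^ e * w') = (ZMod.χ₈ (a : ZMod 8)) ^ e * 1 := by
    rw [kron_two_pow_mul a e w' hw'_odd, jacobi_pos_one a ha4 w' hw'4 hw'M]
  -- periodicity
  have hn : 2 ^ e * w' = 2 ^ e * w + (2 * j) * T := by
    rw [hw'def, hPdef, hTu]; ring
  have hNle : N ≤ 2 ^ e * w := by
    have h1 : w ≤ 2 ^ e * w := Nat.le_mul_of_pos_left _ (by positivity)
    omega
  have hEq : kron a (2 ^ e * w') = kron a (2 ^ e * w) := by
    rw [hn]; exact hiter (2 * j) _ hNle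
  rw [hK1, hK2] at hEq
  -- χ₈ a ≠ 0 since a is odd
  have hχ : (ZMod.χ₈ (a : ZMod 8)) ≠ 0 := by
    rw [ZMod.χ₈_int_eq_if_mod_eight]
    rw [if_neg (by omega)]
    split <;> norm_num
  have hfin := mul_left_cancel₀ (pow_ne_zero e hχ) hEq
  norm_num at hfin
end

section
/- Let a be an integer with a ≡ 3 (mod 4), let n ≥ 0, and let m = 2n + 1. Then J(a | m + 2|a|) = −J(a | m), where J(· | ·) is the Jacobi symbol. In particular, |a| is not a period of the sequence n ↦ κ_a(2n + 1). -/
lemma kron_odd (a : ℤ) (m : ℕ) : kron a (2 * m + 1) = jacobiSym a (2 * m + 1) := by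
  have h0 : (2 * m + 1) ≠ 0 := by omega
  have hodd : ¬ (2 ∣ (2 * m + 1)) := by omega
  have hv : padicValNat 2 (2 * m + 1) = 0 := padicValNat.eq_zero_of_not_dvd hodd
  simp [kron, h0, hv]

lemma jacobi_flip_s9 (a : ℤ) (h4 : a % 4 = 3) {b : ℕ} (hb : Odd b) :
    jacobiSym a (b + 2 * a.natAbs) = - jacobiSym a b := by
  set A := a.natAbs with hA
  have hAodd : Odd A := by rw [Nat.odd_iff]; omega
  have hb2A : Odd (b + 2 * A) := by rcases hb with ⟨k, hk⟩; exact ⟨k + A, by omega⟩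
  have hdiv : (b + 2 * A) / 2 = b / 2 + A := by omega
  have hmodl : jacobiSym ((b + 2 * A : ℕ) : ℤ) A = jacobiSym (b : ℤ) A := by
    apply jacobiSym.mod_left'
    have : ((b + 2 * A : ℕ) : ℤ) = (b : ℤ) + (A : ℤ) * 2 := by push_cast; ring
    rw [this]
    exact Int.add_mul_emod_self_left ..
  rcases le_or_gt 0 a with hpos | hneg
  · have haA : a = (A : ℤ) := by omega
    have hA4 : A % 4 = 3 := by omega
    rw [haA, jacobiSym.quadratic_reciprocity hAodd hb2A,
      jacobiSym.quadratic_reciprocity hAodd hb, hdiv, hmodl, mul_add, pow_add]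
    have : ((-1 : ℤ)) ^ (A / 2 * A) = -1 := by
      apply Odd.neg_one_pow
      exact (Nat.odd_iff.mpr (by omega)).mul hAodd
    rw [this]
    ring
  · have haA : a = -(A : ℤ) := by omega
    have hA4 : A % 4 = 1 := by omega
    have h1 : jacobiSym ((A : ℕ) : ℤ) (b + 2 * A) = jacobiSym ((A : ℕ) : ℤ) b := by
      rw [jacobiSym.quadratic_reciprocity_one_mod_four hA4 hb2A,
        jacobiSym.quadratic_reciprocity_one_mod_four hA4 hb, hmodl]
    have hχ : ZMod.χ₄ ((b + 2 * A : ℕ) : ZMod 4) = - ZMod.χ₄ ((b : ℕ) : ZMod 4) := by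
      rw [ZMod.χ₄_nat_mod_four, ZMod.χ₄_nat_mod_four b]
      have hb4 : b % 4 = 1 ∨ b % 4 = 3 := by
        rcases hb with ⟨k, hk⟩; omega
      rcases hb4 with hb1 | hb3
      · have : (b + 2 * A) % 4 = 3 := by omega
        rw [this, hb1]; decide
      · have : (b + 2 * A) % 4 = 1 := by omega
        rw [this, hb3]; decide
    rw [haA, jacobiSym.neg _ hb2A, jacobiSym.neg _ hb, h1, hχ]
    ring

theorem jacobi_antiperiod_of_three_mod_four (a : ℤ) (h : a ≡ 3 [ZMOD 4]) (n : ℕ) :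
    jacobiSym a ((2 * n + 1) + 2 * a.natAbs) = - jacobiSym a (2 * n + 1) ∧
    ∃ m : ℕ, kron a (2 * (m + a.natAbs) + 1) ≠ kron a (2 * m + 1) := by
  have h4 : a % 4 = 3 := by rw [Int.ModEq] at h; omega
  constructor
  · exact jacobi_flip_s9 a h4 ⟨n, by omega⟩
  · refine ⟨0, ?_⟩
    rw [kron_odd, kron_odd]
    have : (2 * (0 + a.natAbs) + 1) = (2 * 0 + 1) + 2 * a.natAbs := by omega
    rw [this, jacobi_flip_s9 a h4 (b := 2 * 0 + 1) ⟨0, by omega⟩]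
    simp [jacobiSym.one_right]
end

section
/- Let a be an integer with a ≡ 3 (mod 4). Then no odd positive integer is a period of the sequence n ↦ J(a | 2n + 1): for every odd integer T ≥ 1 there exists n ≥ 0 with J(a | 2(n + T) + 1) ≠ J(a | 2n + 1), where J(· | ·) is the Jacobi symbol. (Since the sequence is periodic with period 2|a|, its least period is even.) -/
theorem no_odd_period_of_jacobi_three_mod_four (a : ℤ) (h : a ≡ 3 [ZMOD 4]) :
    ∀ T : ℕ, 1 ≤ T → Odd T →
      ∃ n : ℕ, jacobiSym a (2 * (n + T) + 1) ≠ jacobiSym a (2 * n + 1) := by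
  intro T hT1 hTodd
  by_contra hc
  push_neg at hc
  set b := a.natAbs with hb
  have h4 : a % 4 = 3 := h
  have hb1 : 1 ≤ b := by
    have : a ≠ 0 := by omega
    omega
  -- iterated periodicity
  have key : ∀ k : ℕ, jacobiSym a (2 * (k * T) + 1) = 1 := by
    intro k
    induction k with
    | zero => simp
    | succ k ih =>
      have h1 := hc (k * T)
      have h2 : (k + 1) * T = k * T + T := by ring
      rw [h2, h1, ih]
  have hkey := key b
  -- reduce 2*(b*T)+1 mod 4*b
  have hboddn : Odd (2 * (b * T) + 1) := ⟨b * T, by ring⟩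
  obtain ⟨t, ht⟩ := hTodd
  have hmod : (2 * (b * T) + 1) % (4 * b) = 2 * b + 1 := by
    have : 2 * (b * T) + 1 = (2 * b + 1) + (4 * b) * t := by
      subst ht; ring
    rw [this, Nat.add_mul_mod_self_left, Nat.mod_eq_of_lt (by omega)]
  have hred : jacobiSym a (2 * (b * T) + 1) = jacobiSym a (2 * b + 1) := by
    rw [jacobiSym.mod_right a hboddn, ← hb, hmod]
  -- compute J(a | 2b+1) = -1
  have hodd2b1 : Odd (2 * b + 1) := ⟨b, by ring⟩
  have hval : jacobiSym a (2 * b + 1) = -1 := by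
    rcases lt_or_gt_of_ne (show a ≠ 0 by omega) with hneg | hpos
    · -- a = -b, b % 4 = 1
      have ha : a = -(b : ℤ) := by simp only [hb]; omega
      have hb4 : b % 4 = 1 := by omega
      rw [ha, jacobiSym.neg _ hodd2b1]
      have h1 : jacobiSym (b : ℤ) (2 * b + 1) = 1 := by
        rw [jacobiSym.quadratic_reciprocity_one_mod_four hb4 hodd2b1,
          jacobiSym.mod_left]
        rw [show ((2 * b + 1 : ℕ) : ℤ) = 1 + (b : ℤ) * 2 by push_cast; ring,
          Int.add_mul_emod_self_left, ← jacobiSym.mod_left, jacobiSym.one_left]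
      rw [h1, ZMod.χ₄_nat_eq_if_mod_four]
      have h3 : (2 * b + 1) % 4 = 3 := by omega
      simp [h3]
    · -- a = b, b % 4 = 3
      have ha : a = (b : ℤ) := by simp only [hb]; omega
      have hb4 : b % 4 = 3 := by omega
      have h24 : (2 * b + 1) % 4 = 3 := by omega
      rw [ha, jacobiSym.quadratic_reciprocity_three_mod_four hb4 h24,
        jacobiSym.mod_left]
      rw [show ((2 * b + 1 : ℕ) : ℤ) = 1 + (b : ℤ) * 2 by push_cast; ring,
        Int.add_mul_emod_self_left, ← jacobiSym.mod_left, jacobiSym.one_left]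
  rw [hred, hval] at hkey
  exact absurd hkey (by decide)
end

section
/- Let a be a nonzero integer. Then either there exist q ≥ 1 and a Dirichlet character χ mod q with (κ_a(n) : ℂ) = χ(n) for all n ≥ 1, or there exist q ≥ 1 and a Dirichlet character χ mod q with (κ_a(n) : ℂ) = χ(n) · κ_{-1}(n) for all n ≥ 1 (where κ_{-1} is the regular paperfolding sequence). -/
lemma oddPart_ne_zero {n : ℕ} (hn : n ≠ 0) : n / 2 ^ padicValNat 2 n ≠ 0 :=
  Nat.div_ne_zero_iff_of_dvd pow_padicValNat_dvd |>.mpr ⟨hn, by positivity⟩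

lemma oddPart_odd {n : ℕ} (hn : n ≠ 0) : (n / 2 ^ padicValNat 2 n) % 2 = 1 := by
  have h := Nat.not_dvd_ordCompl Nat.prime_two hn
  rw [Nat.factorization_def _ Nat.prime_two] at h
  omega

lemma neg_one_pow_div_two_eq_chi4 {m : ℕ} (hm : m % 2 = 1) :
    (-1 : ℤ) ^ (m / 2) = ZMod.χ₄ (m : ZMod 4) := by
  rcases Nat.odd_mod_four_iff.mp hm with h | h
  · rw [ZMod.neg_one_pow_div_two_of_one_mod_four h, ZMod.χ₄_nat_one_mod_four h]
  · rw [ZMod.neg_one_pow_div_two_of_three_mod_four h, ZMod.χ₄_nat_three_mod_four h]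

lemma chi4_sq {m : ℕ} (hm : m % 2 = 1) :
    (ZMod.χ₄ (m : ZMod 4) : ℤ) * ZMod.χ₄ (m : ZMod 4) = 1 := by
  rcases Nat.odd_mod_four_iff.mp hm with h | h
  · rw [ZMod.χ₄_nat_one_mod_four h]; ring
  · rw [ZMod.χ₄_nat_three_mod_four h]; ring

lemma chi8_natAbs {a : ℤ} : ZMod.χ₈ (a : ZMod 8) = ZMod.χ₈ (a.natAbs : ZMod 8) := by
  rcases Int.natAbs_eq a with h | h
  · conv_lhs => rw [h]
    rw [Int.cast_natCast]
  · conv_lhs => rw [h]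
    rw [Int.cast_neg, Int.cast_natCast, neg_eq_neg_one_mul, map_mul]
    have h1 : ZMod.χ₈ (-1 : ZMod 8) = 1 := by decide
    rw [h1, one_mul]

/-- reciprocity step : for odd `a` and odd `m`,
`J(a|m) = (if a % 4 = 3 then χ₄ m else 1) * J(m | a.natAbs)`. -/
lemma jacobi_recip {a : ℤ} (ha2 : a % 2 = 1) {m : ℕ} (hm : m % 2 = 1) :
    jacobiSym a m = (if a % 4 = 3 then (ZMod.χ₄ (m : ZMod 4) : ℤ) else 1)
      * jacobiSym (m : ℤ) a.natAbs := by
  have hmo : Odd m := Nat.odd_iff.mpr hm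
  have hAo : Odd a.natAbs := Int.natAbs_odd.mpr (Int.odd_iff.mpr ha2)
  have hA2 : a.natAbs % 2 = 1 := Nat.odd_iff.mp hAo
  have recip : a.natAbs % 4 = 1 ∨ a.natAbs % 4 = 3 →
      jacobiSym (a.natAbs : ℤ) m
        = (if a.natAbs % 4 = 3 then (ZMod.χ₄ (m : ZMod 4) : ℤ) else 1)
          * jacobiSym (m : ℤ) a.natAbs := by
    intro h
    rcases h with h | h
    · rw [if_neg (by omega), one_mul, jacobiSym.quadratic_reciprocity_one_mod_four h hmo]
    · rw [if_pos h, jacobiSym.quadratic_reciprocity hAo hmo, pow_mul,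
        ZMod.neg_one_pow_div_two_of_three_mod_four h, neg_one_pow_div_two_eq_chi4 hm]
  have hor : a.natAbs % 4 = 1 ∨ a.natAbs % 4 = 3 := by omega
  rcases Int.natAbs_eq a with h | h
  · conv_lhs => rw [h]
    rw [recip hor]
    by_cases h3 : a.natAbs % 4 = 3
    · rw [if_pos h3, if_pos (by omega)]
    · rw [if_neg h3, if_neg (by omega)]
  · conv_lhs => rw [h]
    rw [jacobiSym.neg _ hmo, recip hor]
    rcases hor with h1 | h1
    · rw [if_neg (by omega), if_pos (by omega), one_mul]
    · rw [if_pos h1, if_neg (by omega), ← mul_assoc, chi4_sq hm, one_mul]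

lemma kron_neg_one {n : ℕ} (hn : n ≠ 0) :
    kron (-1) n = ZMod.χ₄ ((n / 2 ^ padicValNat 2 n : ℕ) : ZMod 4) := by
  rw [kron, if_neg hn]
  have h8 : (((-1 : ℤ)) : ZMod 8) = (-1 : ZMod 8) := by push_cast; ring
  rw [h8, show ZMod.χ₈ (-1 : ZMod 8) = 1 from by decide, one_pow, one_mul,
    jacobiSym.at_neg_one (Nat.odd_iff.mpr (oddPart_odd hn))]

lemma kron_neg_one_eq_or {n : ℕ} (hn : n ≠ 0) : kron (-1) n = 1 ∨ kron (-1) n = -1 := by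
  rw [kron_neg_one hn]
  rcases Nat.odd_mod_four_iff.mp (oddPart_odd hn) with h | h
  · left; exact ZMod.χ₄_nat_one_mod_four h
  · right; exact ZMod.χ₄_nat_three_mod_four h

lemma kron_formula_odd {a : ℤ} (ha2 : a % 2 = 1) {n : ℕ} (hn : n ≠ 0) :
    kron a n * (if a % 4 = 3 then kron (-1) n else 1) = jacobiSym (n : ℤ) a.natAbs := by
  have hm2 : (n / 2 ^ padicValNat 2 n) % 2 = 1 := oddPart_odd hn
  have hnm : n = 2 ^ padicValNat 2 n * (n / 2 ^ padicValNat 2 n) :=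
    (Nat.mul_div_cancel' pow_padicValNat_dvd).symm
  have hA2 : a.natAbs % 2 = 1 := Nat.odd_iff.mp (Int.natAbs_odd.mpr (Int.odd_iff.mpr ha2))
  have hRHS : jacobiSym (n : ℤ) a.natAbs
      = (ZMod.χ₈ (a.natAbs : ZMod 8) : ℤ) ^ padicValNat 2 n
        * jacobiSym ((n / 2 ^ padicValNat 2 n : ℕ) : ℤ) a.natAbs := by
    conv_lhs => rw [hnm]
    push_cast
    rw [jacobiSym.mul_left, jacobiSym.pow_left, jacobiSym.at_two (Nat.odd_iff.mpr hA2)]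
  rw [kron, if_neg hn, kron_neg_one hn, hRHS, ← chi8_natAbs, jacobi_recip ha2 hm2]
  split_ifs with h
  · linear_combination ((ZMod.χ₈ ((a : ℤ) : ZMod 8) : ℤ) ^ padicValNat 2 n
      * jacobiSym ((n / 2 ^ padicValNat 2 n : ℕ) : ℤ) a.natAbs) * chi4_sq hm2
  · ring

lemma kron_of_even_even {a : ℤ} (ha : a % 2 = 0) {n : ℕ} (hn : n ≠ 0) (hn2 : n % 2 = 0) :
    kron a n = 0 := by
  have hv : padicValNat 2 n ≠ 0 := by
    rw [Ne, padicValNat.eq_zero_iff]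
    push_neg
    exact ⟨by norm_num, hn, by omega⟩
  rw [kron, if_neg hn, ZMod.χ₈_int_eq_if_mod_eight, if_pos ha, zero_pow hv, zero_mul]

lemma kron_zero (a : ℤ) : kron a 0 = 0 := if_pos rfl

lemma kron_one (a : ℤ) : kron a 1 = 1 := by simp [kron]

lemma kron_two (a : ℤ) : kron a 2 = ZMod.χ₈ (a : ZMod 8) := by
  have : padicValNat 2 2 = 1 := by simp [padicValNat.self]
  simp [kron, this]

lemma kron_of_odd (a : ℤ) {n : ℕ} (hn : n % 2 = 1) : kron a n = jacobiSym a n := by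
  have hv : padicValNat 2 n = 0 := padicValNat.eq_zero_of_not_dvd (by omega)
  have : n ≠ 0 := by omega
  simp [kron, hv, this]

lemma kron_mul (a : ℤ) (m n : ℕ) : kron a (m * n) = kron a m * kron a n := by
  rcases eq_or_ne m 0 with rfl | hm
  · simp [kron_zero]
  rcases eq_or_ne n 0 with rfl | hn
  · simp [kron_zero]
  have hv : padicValNat 2 (m * n) = padicValNat 2 m + padicValNat 2 n :=
    padicValNat.mul hm hn
  have hdiv : (m * n) / 2 ^ (padicValNat 2 m + padicValNat 2 n)
      = (m / 2 ^ padicValNat 2 m) * (n / 2 ^ padicValNat 2 n) := by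
    rw [pow_add]
    exact Nat.div_mul_div_comm pow_padicValNat_dvd pow_padicValNat_dvd |>.symm
  rw [kron, if_neg (by positivity), hv, hdiv, kron, if_neg hm, kron, if_neg hn,
    jacobiSym.mul_right' _ (oddPart_ne_zero hm) (oddPart_ne_zero hn), pow_add]
  ring

lemma exists_char {f : ℕ → ℤ} {q : ℕ} (hq : q ≠ 0) (hf1 : f 1 = 1)
    (hmul : ∀ m n, f (m * n) = f m * f n)
    (hper : ∀ m n, m ≠ 0 → n ≠ 0 → m % q = n % q → f m = f n)
    (hzero : ∀ n, n ≠ 0 → ¬ n.Coprime q → f n = 0) :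
    ∃ χ : DirichletCharacter ℂ q, ∀ n : ℕ, 1 ≤ n → (f n : ℂ) = χ (n : ZMod q) := by
  haveI : NeZero q := ⟨hq⟩
  have hmod : ∀ x : ℕ, (x + q) % q = x % q := fun x => Nat.add_mod_right x q
  refine ⟨⟨⟨⟨fun x => (f (x.val + q) : ℂ), ?_⟩, ?_⟩, ?_⟩, ?_⟩
  · have : f ((1 : ZMod q).val + q) = f 1 := by
      apply hper _ _ (by omega) one_ne_zero
      rw [hmod, ZMod.val_one_eq_one_mod, Nat.mod_mod_of_dvd 1 dvd_rfl]
    simp [this, hf1]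
  · intro x y
    have key : f ((x * y).val + q) = f ((x.val + q) * (y.val + q)) := by
      apply hper _ _ (by omega) (by positivity)
      have h1 : (x.val + q) * (y.val + q) = x.val * y.val + (x.val + y.val + q) * q := by ring
      rw [hmod, ZMod.val_mul, Nat.mod_mod_of_dvd _ dvd_rfl, h1, Nat.add_mul_mod_self_right]
    simp only [key, hmul]
    push_cast
    ring
  · intro x hx
    have : ¬ (x.val + q).Coprime q := by
      intro hc
      apply hx
      have hc2 : x.val.Coprime q := by
        have := Nat.coprime_add_self_right.mp (Nat.Coprime.symm hc)
        exact this.symm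
      have := (ZMod.isUnit_iff_coprime x.val q).mpr hc2
      rwa [ZMod.natCast_rightInverse x] at this
    simp [hzero _ (by omega) this]
  · intro n hn
    have : f ((n : ZMod q).val + q) = f n := by
      apply hper _ _ (by omega) (by omega)
      rw [hmod, ZMod.val_natCast, Nat.mod_mod_of_dvd _ dvd_rfl]
    show (f n : ℂ) = (f ((n : ZMod q).val + q) : ℂ)
    rw [this]

theorem kron_eq_character_or_character_mul_paperfolding (a : ℤ) (ha : a ≠ 0) :
    (∃ (q : ℕ), 1 ≤ q ∧ ∃ χ : DirichletCharacter ℂ q,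
        ∀ n : ℕ, 1 ≤ n → (kron a n : ℂ) = χ (n : ZMod q)) ∨
    (∃ (q : ℕ), 1 ≤ q ∧ ∃ χ : DirichletCharacter ℂ q,
        ∀ n : ℕ, 1 ≤ n → (kron a n : ℂ) = χ (n : ZMod q) * (kron (-1) n : ℂ)) := by
  have hA0 : a.natAbs ≠ 0 := Int.natAbs_ne_zero.mpr ha
  by_cases ha2 : a % 2 = 0
  · -- `a` even : `kron a` is itself a character mod `4 * |a|`
    left
    have hq : 4 * a.natAbs ≠ 0 := by omega
    have hper : ∀ m n : ℕ, m ≠ 0 → n ≠ 0 → m % (4 * a.natAbs) = n % (4 * a.natAbs) →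
        kron a m = kron a n := by
      intro m n hm hn h
      have d : (2:ℕ) ∣ 4 * a.natAbs := ⟨2 * a.natAbs, by ring⟩
      have h2 : m % 2 = n % 2 := by
        calc m % 2 = m % (4 * a.natAbs) % 2 := (Nat.mod_mod_of_dvd m d).symm
          _ = n % (4 * a.natAbs) % 2 := by rw [h]
          _ = n % 2 := Nat.mod_mod_of_dvd n d
      rcases Nat.even_or_odd m with he | ho
      · rw [kron_of_even_even ha2 hm (Nat.even_iff.mp he),
          kron_of_even_even ha2 hn (by have := Nat.even_iff.mp he; omega)]
      · have hmo : m % 2 = 1 := Nat.odd_iff.mp ho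
        have hno : n % 2 = 1 := by omega
        rw [kron_of_odd a hmo, kron_of_odd a hno,
          jacobiSym.mod_right a (Nat.odd_iff.mpr hmo), h,
          ← jacobiSym.mod_right a (Nat.odd_iff.mpr hno)]
    have hzero : ∀ n : ℕ, n ≠ 0 → ¬ n.Coprime (4 * a.natAbs) → kron a n = 0 := by
      intro n hn hnc
      rcases Nat.even_or_odd n with he | ho
      · exact kron_of_even_even ha2 hn (Nat.even_iff.mp he)
      · have hno : n % 2 = 1 := Nat.odd_iff.mp ho
        rw [kron_of_odd a hno]
        haveI : NeZero n := ⟨hn⟩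
        rw [jacobiSym.eq_zero_iff_not_coprime]
        intro hg
        apply hnc
        have h4 : Nat.Coprime n 4 := by
          have h2' : Nat.Coprime n 2 := Nat.coprime_two_right.mpr ho
          have := Nat.Coprime.pow_right 2 h2'
          simpa using this
        have hA : Nat.Coprime n a.natAbs := by
          have hg' : Nat.gcd a.natAbs n = 1 := by simpa [Int.gcd] using hg
          exact Nat.Coprime.symm hg'
        exact Nat.Coprime.mul_right h4 hA
    obtain ⟨χ, hχ⟩ := exists_char hq (kron_one a) (kron_mul a) hper hzero
    exact ⟨4 * a.natAbs, by omega, χ, hχ⟩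
  · -- `a` odd
    have ha2' : a % 2 = 1 := by omega
    have hmul : ∀ m n : ℕ, jacobiSym ((m * n : ℕ) : ℤ) a.natAbs
        = jacobiSym (m : ℤ) a.natAbs * jacobiSym (n : ℤ) a.natAbs := by
      intro m n
      rw [Nat.cast_mul, jacobiSym.mul_left]
    have hper : ∀ m n : ℕ, m ≠ 0 → n ≠ 0 → m % a.natAbs = n % a.natAbs →
        jacobiSym (m : ℤ) a.natAbs = jacobiSym (n : ℤ) a.natAbs := by
      intro m n _ _ h
      exact jacobiSym.mod_left' (by omega)
    have hzero : ∀ n : ℕ, n ≠ 0 → ¬ n.Coprime a.natAbs → jacobiSym (n : ℤ) a.natAbs = 0 := by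
      intro n hn hnc
      haveI : NeZero a.natAbs := ⟨hA0⟩
      rw [jacobiSym.eq_zero_iff_not_coprime]
      intro hg
      rw [Int.gcd_natCast_natCast] at hg
      exact hnc hg
    obtain ⟨χ, hχ⟩ := exists_char (f := fun n : ℕ => jacobiSym (n : ℤ) a.natAbs) hA0
      (by simpa using jacobiSym.one_left a.natAbs) hmul hper hzero
    by_cases h4 : a % 4 = 3
    · right
      refine ⟨a.natAbs, by omega, χ, fun n hn => ?_⟩
      have hne : n ≠ 0 := by omega
      have key := kron_formula_odd ha2' hne
      rw [if_pos h4] at key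
      have hz : kron a n = jacobiSym (n : ℤ) a.natAbs * kron (-1) n := by
        rcases kron_neg_one_eq_or hne with h | h <;> rw [h] at key ⊢
        · rw [mul_one] at key
          rw [key, mul_one]
        · linarith
      rw [← hχ n hn]
      exact_mod_cast hz
    · left
      refine ⟨a.natAbs, by omega, χ, fun n hn => ?_⟩
      have hne : n ≠ 0 := by omega
      have key := kron_formula_odd ha2' hne
      rw [if_neg h4, mul_one] at key
      rw [← hχ n hn]
      exact_mod_cast key
end

section
/- Let a be an integer with a ≡ 3 (mod 4), and let χ be a Dirichlet character mod 4|a| satisfying χ(n) = κ_a(n) for all odd n ≥ 1 and χ(n) = 0 for all even n. Then for every complex s with Re(s) > 1, ∑'_{n ≥ 1} κ_a(n) / n^s = (1 − χ₈(a)·2^{−s})^{−1} · ∑'_{n ≥ 1} χ(n) / n^s (both series converging absolutely). -/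
open Complex Function

lemma chi8_abs_le (x : ZMod 8) : |ZMod.χ₈ x| ≤ 1 := by revert x; decide

lemma kron_abs_le (a : ℤ) (n : ℕ) : |kron a n| ≤ 1 := by
  unfold kron
  split
  · simp
  · rw [abs_mul, _root_.abs_pow]
    have h1 : |ZMod.χ₈ (a : ZMod 8)| ≤ 1 := chi8_abs_le _
    have h2 : |jacobiSym a (n / 2 ^ padicValNat 2 n)| ≤ 1 := by
      rcases jacobiSym.trichotomy a (n / 2 ^ padicValNat 2 n) with h | h | h <;> simp [h]
    calc |ZMod.χ₈ (a : ZMod 8)| ^ padicValNat 2 n * |jacobiSym a (n / 2 ^ padicValNat 2 n)|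
        ≤ 1 ^ padicValNat 2 n * 1 := by
          gcongr
      _ = 1 := by simp

lemma kron_pow_mul (a : ℤ) (k m : ℕ) :
    kron a (2 ^ k * (2 * m + 1)) =
      (ZMod.χ₈ (a : ZMod 8)) ^ k * jacobiSym a (2 * m + 1) := by
  have hodd : ¬ (2 ∣ (2 * m + 1)) := by omega
  have hval : padicValNat 2 (2 ^ k * (2 * m + 1)) = k := by
    rw [padicValNat.mul (by positivity) (by omega), padicValNat.prime_pow,
      padicValNat.eq_zero_of_not_dvd hodd, add_zero]
  unfold kron
  rw [if_neg (by positivity), hval, Nat.mul_div_cancel_left _ (by positivity)]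

lemma rep_exists (n : ℕ) (hn : n ≠ 0) : ∃ k m : ℕ, n = 2 ^ k * (2 * m + 1) := by
  set v := padicValNat 2 n with hv
  obtain ⟨c, hc⟩ := pow_padicValNat_dvd (p := 2) (n := n)
  have hcne : c ≠ 0 := by rintro rfl; simp at hc; exact hn hc
  have hodd : ¬ 2 ∣ c := by
    rintro ⟨d, hd⟩
    have : 2 ^ (v + 1) ∣ n := ⟨d, by rw [hc, hd]; ring⟩
    exact pow_succ_padicValNat_not_dvd hn this
  obtain ⟨m, hm⟩ := Nat.odd_iff.mpr (by omega : c % 2 = 1)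
  exact ⟨v, m, by rw [hc, hm]⟩

lemma e_inj : Function.Injective (fun p : ℕ × ℕ => 2 ^ p.1 * (2 * p.2 + 1)) := by
  rintro ⟨k, m⟩ ⟨j, l⟩ hp
  simp only at hp
  have hval : ∀ k m : ℕ, padicValNat 2 (2 ^ k * (2 * m + 1)) = k := by
    intro k m
    rw [padicValNat.mul (by positivity) (by omega), padicValNat.prime_pow,
      padicValNat.eq_zero_of_not_dvd (by omega), add_zero]
  have hkj : k = j := by rw [← hval k m, ← hval j l, hp]
  subst hkj
  have hml : 2 * m + 1 = 2 * l + 1 := Nat.eq_of_mul_eq_mul_left (by positivity) hp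
  exact Prod.ext rfl (by omega)

lemma odd_inj : Function.Injective (fun m : ℕ => 2 * m + 1) := by
  intro m l hml
  simpa using hml

theorem kron_dirichlet_series_eq (a : ℤ) (h : a ≡ 3 [ZMOD 4])
    (χ : DirichletCharacter ℂ (4 * a.natAbs))
    (hχodd : ∀ n : ℕ, 1 ≤ n → Odd n → χ (n : ZMod (4 * a.natAbs)) = (kron a n : ℂ))
    (hχeven : ∀ n : ℕ, Even n → χ (n : ZMod (4 * a.natAbs)) = 0)
    (s : ℂ) (hs : 1 < s.re) :
    Summable (fun n : ℕ => ‖(kron a n : ℂ) / (n : ℂ) ^ s‖) ∧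
    Summable (fun n : ℕ => ‖χ (n : ZMod (4 * a.natAbs)) / (n : ℂ) ^ s‖) ∧
    ∑' n : ℕ, (kron a n : ℂ) / (n : ℂ) ^ s =
      (1 - ((ZMod.χ₈ (a : ZMod 8) : ℤ) : ℂ) * (2 : ℂ) ^ (-s))⁻¹ *
        ∑' n : ℕ, χ (n : ZMod (4 * a.natAbs)) / (n : ℂ) ^ s := by
  have hg : Summable (fun n : ℕ => ((n : ℝ) ^ s.re)⁻¹) :=
    Real.summable_nat_rpow_inv.mpr hs
  set F : ℕ → ℂ := fun n => (kron a n : ℂ) / (n : ℂ) ^ s with hF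
  set G : ℕ → ℂ := fun n => χ (n : ZMod (4 * a.natAbs)) / (n : ℂ) ^ s with hG
  have hkron_norm : ∀ n : ℕ, ‖(kron a n : ℂ)‖ ≤ 1 := by
    intro n
    rw [norm_intCast, ← Int.cast_abs]
    exact_mod_cast kron_abs_le a n
  have hbound : ∀ (f : ℕ → ℂ), (∀ n, ‖f n‖ ≤ 1) →
      Summable (fun n : ℕ => ‖f n / (n : ℂ) ^ s‖) := by
    intro f hf
    apply hg.of_nonneg_of_le (fun n => norm_nonneg _)
    intro n
    rcases Nat.eq_zero_or_pos n with rfl | hn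
    · rw [Nat.cast_zero, Complex.zero_cpow (by
        intro h0; rw [h0] at hs; simp at hs; linarith), div_zero, norm_zero]
      positivity
    · rw [norm_div, norm_natCast_cpow_of_pos hn, ← Real.rpow_neg (by positivity),
        Real.rpow_neg (by positivity), div_eq_mul_inv]
      exact mul_le_of_le_one_left (by positivity) (hf n)
  have S1 : Summable (fun n : ℕ => ‖F n‖) := hbound _ hkron_norm
  have hχnorm : ∀ n : ℕ, ‖χ (n : ZMod (4 * a.natAbs))‖ ≤ 1 := by
    intro n
    rcases Nat.even_or_odd n with he | ho
    · rw [hχeven n he, norm_zero]; norm_num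
    · rcases Nat.eq_zero_or_pos n with rfl | hn
      · simp at ho
      · rw [hχodd n hn ho]; exact hkron_norm n
  have S2 : Summable (fun n : ℕ => ‖G n‖) := hbound _ hχnorm
  refine ⟨S1, S2, ?_⟩
  -- the key identity
  set x : ℂ := ((ZMod.χ₈ (a : ZMod 8) : ℤ) : ℂ) * (2 : ℂ) ^ (-s) with hx
  have hxnorm : ‖x‖ < 1 := by
    rw [norm_mul]
    have h2 : ‖(2 : ℂ) ^ (-s)‖ = (2 : ℝ) ^ (-s.re) := by
      rw [show ((2:ℂ)) = ((2:ℕ):ℂ) by norm_num, norm_natCast_cpow_of_pos (by norm_num)]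
      simp
    have hle : ‖((ZMod.χ₈ (a : ZMod 8) : ℤ) : ℂ)‖ ≤ 1 := by
      rw [norm_intCast, ← Int.cast_abs]
      exact_mod_cast chi8_abs_le _
    have hlt : (2 : ℝ) ^ (-s.re) < 1 :=
      Real.rpow_lt_one_of_one_lt_of_neg (by norm_num) (by linarith)
    calc ‖((ZMod.χ₈ (a : ZMod 8) : ℤ) : ℂ)‖ * ‖(2:ℂ) ^ (-s)‖
        ≤ 1 * ‖(2:ℂ) ^ (-s)‖ := by gcongr
      _ = (2:ℝ) ^ (-s.re) := by rw [one_mul, h2]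
      _ < 1 := hlt
  set e : ℕ × ℕ → ℕ := fun p => 2 ^ p.1 * (2 * p.2 + 1) with he
  -- F ∘ e = x ^ k * G (2m+1)
  have hcpow2 : ∀ k : ℕ, (((2:ℕ) ^ k : ℕ) : ℂ) ^ s = (((2:ℕ):ℂ) ^ s) ^ k := by
    intro k
    rw [Nat.cast_pow, ← Complex.natCast_cpow_natCast_mul, Complex.cpow_nat_mul]
  have hkey : ∀ k m : ℕ, F (e (k, m)) = x ^ k * G (2 * m + 1) := by
    intro k m
    have hGodd : G (2 * m + 1) = (kron a (2 * m + 1) : ℂ) / ((2 * m + 1 : ℕ) : ℂ) ^ s := by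
      rw [hG]
      simp only
      rw [hχodd (2 * m + 1) (by omega) ⟨m, by omega⟩]
    have hkodd : kron a (2 * m + 1) = jacobiSym a (2 * m + 1) := by
      unfold kron
      rw [if_neg (by omega), padicValNat.eq_zero_of_not_dvd (by omega)]
      simp
    have hsplit : ((e (k, m) : ℕ) : ℂ) ^ s = (((2:ℕ) ^ k : ℕ) : ℂ) ^ s * (((2 * m + 1 : ℕ)) : ℂ) ^ s := by
      rw [he]
      simp only
      rw [Nat.cast_mul, Complex.natCast_mul_natCast_cpow]
    have h2s_ne : ((2:ℕ):ℂ) ^ s ≠ 0 := by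
      rw [Ne, Complex.cpow_eq_zero_iff]
      push_cast
      norm_num
    rw [hF]
    simp only
    rw [kron_pow_mul, hsplit, hGodd, hkodd, hcpow2, hx]
    push_cast
    rw [mul_pow, Complex.cpow_neg]
    have hb_ne : (((2 * m + 1 : ℕ)) : ℂ) ^ s ≠ 0 := by
      rw [Ne, Complex.cpow_eq_zero_iff, Nat.cast_eq_zero]
      rintro ⟨h0, -⟩
      omega
    field_simp
    have h2' : (2:ℂ) ^ s ≠ 0 := by exact_mod_cast h2s_ne
    rw [mul_assoc _ (((2:ℂ) ^ s) ^ k), ← mul_pow, mul_one_div_cancel h2', one_pow, mul_one]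
  -- support / range facts
  have hrange : Function.support F ⊆ Set.range e := by
    intro n hn
    have hn0 : n ≠ 0 := by
      rintro rfl
      apply hn
      rw [hF]; simp [kron]
    obtain ⟨k, m, hkm⟩ := rep_exists n hn0
    exact ⟨(k, m), hkm.symm⟩
  have hFsum : Summable F := S1.of_norm
  have htsum1 : ∑' n : ℕ, F n = ∑' p : ℕ × ℕ, F (e p) :=
    (Function.Injective.tsum_eq e_inj hrange).symm
  have hGsum : Summable G := S2.of_norm
  have hGodd_sum : Summable (fun m : ℕ => G (2 * m + 1)) :=
    hGsum.comp_injective odd_inj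
  have hH : Summable (fun p : ℕ × ℕ => F (e p)) := hFsum.comp_injective e_inj
  have htsum2 : ∑' p : ℕ × ℕ, F (e p) = (∑' k : ℕ, x ^ k) * ∑' m : ℕ, G (2 * m + 1) := by
    rw [Summable.tsum_prod' hH (fun k => by
      have : (fun m => F (e (k, m))) = fun m => x ^ k * G (2 * m + 1) := by
        funext m; exact hkey k m
      rw [this]
      exact hGodd_sum.mul_left _)]
    calc ∑' k : ℕ, ∑' m : ℕ, F (e (k, m))
        = ∑' k : ℕ, ∑' m : ℕ, x ^ k * G (2 * m + 1) := by
          congr 1; funext k; congr 1; funext m; exact hkey k m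
      _ = ∑' k : ℕ, x ^ k * ∑' m : ℕ, G (2 * m + 1) := by
          congr 1; funext k; exact tsum_mul_left
      _ = (∑' k : ℕ, x ^ k) * ∑' m : ℕ, G (2 * m + 1) := tsum_mul_right
  have htsum3 : ∑' n : ℕ, G n = ∑' m : ℕ, G (2 * m + 1) := by
    refine (Function.Injective.tsum_eq (g := fun m : ℕ => 2 * m + 1) odd_inj ?_).symm
    intro n hn
    rcases Nat.even_or_odd n with he' | ho
    · exfalso
      apply hn
      rw [hG]
      simp only
      rw [hχeven n he', zero_div]
    · obtain ⟨m, hm⟩ := ho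
      exact ⟨m, by show 2 * m + 1 = n; omega⟩
  rw [htsum1, htsum2, tsum_geometric_of_norm_lt_one hxnorm, htsum3]
end
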